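/- Let Ω_JN be a real symmetric positive semidefinite L×L matrix, Ω_JD a real L×L matrix, ξ², J̌ real numbers, and φ : ℝ^L → ℝ any objective function. Suppose β ∈ ℝ^L satisfies the original constraint J̌ · βᵀ Ω_JD β + J̌ ξ² ≤ βᵀ Ω_JN β, and suppose w* minimizes φ over the linearized feasible set {w : J̌ · wᵀ Ω_JD w + J̌ ξ² ≤ βᵀ Ω_JN β + 2 βᵀ Ω_JN (w − β)}. Then w* also satisfies the original constraint J̌ · w*ᵀ Ω_JD w* + J̌ ξ² ≤ w*ᵀ Ω_JN w*, and φ(w*) ≤ φ(β). (Monotone feasibility of each iteration of the linearization method, Algorithm 3.) -/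

import Mathlib

open Matrix

lemma symm_dot {L : ℕ} (A : Matrix (Fin L) (Fin L) ℝ) (hA : A.IsHermitian)
    (u v : Fin L → ℝ) : u ⬝ᵥ A.mulVec v = v ⬝ᵥ A.mulVec u := by
  rw [Matrix.dotProduct_mulVec, ← Matrix.mulVec_transpose, dotProduct_comm]
  congr 1
  rw [show Aᵀ = A from hA]

/-- monotone feasibility of each iteration of the linearization
method, Algorithm 3: if `β` satisfies the original constraint and `w*`
minimizes `φ` over the linearized feasible set, then `w*` satisfies the
original constraint and `φ(w*) ≤ φ(β)`. -/
theorem linearization_monotone_feasibility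
    {L : ℕ}
    (ΩJN : Matrix (Fin L) (Fin L) ℝ) (hJN : ΩJN.PosSemidef)
    (ΩJD : Matrix (Fin L) (Fin L) ℝ)
    (ξsq Jcheck : ℝ)
    (φ : (Fin L → ℝ) → ℝ)
    (β wstar : Fin L → ℝ)
    (hβ : Jcheck * (β ⬝ᵥ ΩJD.mulVec β) + Jcheck * ξsq ≤ β ⬝ᵥ ΩJN.mulVec β)
    (hwfeas : Jcheck * (wstar ⬝ᵥ ΩJD.mulVec wstar) + Jcheck * ξsq
        ≤ β ⬝ᵥ ΩJN.mulVec β + 2 * (β ⬝ᵥ ΩJN.mulVec (wstar - β)))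
    (hwopt : ∀ w : Fin L → ℝ,
        Jcheck * (w ⬝ᵥ ΩJD.mulVec w) + Jcheck * ξsq
            ≤ β ⬝ᵥ ΩJN.mulVec β + 2 * (β ⬝ᵥ ΩJN.mulVec (w - β)) →
          φ wstar ≤ φ w) :
    (Jcheck * (wstar ⬝ᵥ ΩJD.mulVec wstar) + Jcheck * ξsq
        ≤ wstar ⬝ᵥ ΩJN.mulVec wstar) ∧
    φ wstar ≤ φ β := by
  have hpsd := hJN.dotProduct_mulVec_nonneg (wstar - β)
  have hsym := symm_dot ΩJN hJN.1 β wstar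
  have key : β ⬝ᵥ ΩJN.mulVec β + 2 * (β ⬝ᵥ ΩJN.mulVec (wstar - β))
      ≤ wstar ⬝ᵥ ΩJN.mulVec wstar := by
    have expand : (wstar - β) ⬝ᵥ ΩJN.mulVec (wstar - β)
        = wstar ⬝ᵥ ΩJN.mulVec wstar - 2 * (β ⬝ᵥ ΩJN.mulVec (wstar - β))
          - β ⬝ᵥ ΩJN.mulVec β := by
      simp only [Matrix.mulVec_sub, sub_dotProduct, dotProduct_sub]
      linarith [hsym]
    simp only [RCLike.star_def, starRingEnd_apply, star_trivial] at hpsd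
    -- hpsd : 0 ≤ (wstar - β) ⬝ᵥ ΩJN.mulVec (wstar - β) perhaps with star
    nlinarith [hpsd, expand]
  refine ⟨le_trans hwfeas key, hwopt β ?_⟩
  simpa using hβ
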